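/- Let q = 2^h, let {F_{α(λ),β(λ),λ} : λ ∈ Λ} be a closed set of conics in PG(2,q), and let α_d, β_d, λ_d ∈ GF(q) with Tr(α_d β_d) = 1 and λ_d ∉ Λ ∪ {0}. Suppose that for every λ ∈ Λ one has Tr( ((α(λ)λ + α_d λ_d)/(λ+λ_d)) · ((β(λ)λ + β_d λ_d)/(λ+λ_d)) ) = 1. Extend α and β to Λ' = Λ ∪ {λ_d} ∪ {λ + λ_d : λ ∈ Λ} by setting α(λ_d) = α_d, β(λ_d) = β_d, α(λ+λ_d) = (α(λ)λ + α_d λ_d)/(λ+λ_d) and β(λ+λ_d) = (β(λ)λ + β_d λ_d)/(λ+λ_d). Then {F_{α(μ),β(μ),μ} : μ ∈ Λ'} is a closed set of conics, and consequently {(0,0,1)} ∪ ⋃_{μ∈Λ'} F_{α(μ),β(μ),μ} is a maximal arc of degree 2(|Λ|+1) in PG(2,q). -/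

import Mathlib

open scoped Classical

noncomputable section

namespace MaxArc

variable (F : Type) [Field F] [Fintype F]

/-- The absolute trace map of `GF(2^h)` over `GF(2)`, valued in the field itself
(the prime subfield is identified with `{0,1}`). -/
def tr (h : ℕ) (x : F) : F := ∑ i ∈ Finset.range h, x ^ 2 ^ i

/-- The points of `PG(2,q)`. -/
abbrev Pt := Projectivization F (Fin 3 → F)

/-- The conic `F_{α,β,λ} = {(x,y,z) : α x² + x y + β y² + λ z² = 0}` of `PG(2,q)`.
(The defining equation is homogeneous, so evaluating at the chosen representative
is independent of the choice.) -/
def conicSet (a b l : F) : Set (Pt F) :=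
  {P | a * P.rep 0 ^ 2 + P.rep 0 * P.rep 1 + b * P.rep 1 ^ 2 + l * P.rep 2 ^ 2 = 0}

/-- The lines of `PG(2,q)`: zero sets of nonzero linear forms. -/
def IsLine (L : Set (Pt F)) : Prop :=
  ∃ u v w : F, ¬(u = 0 ∧ v = 0 ∧ w = 0) ∧
    L = {P | u * P.rep 0 + v * P.rep 1 + w * P.rep 2 = 0}

/-- A maximal arc of degree `d`: a nonempty proper set of points met by every line
in exactly `0` or `d` points. -/
def IsMaximalArc (K : Set (Pt F)) (d : ℕ) : Prop :=
  K.Nonempty ∧ K ≠ Set.univ ∧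
    ∀ L : Set (Pt F), IsLine F L → (K ∩ L).ncard = 0 ∨ (K ∩ L).ncard = d

/-- The point `(0,0,1)` of `PG(2,q)`. -/
def pt001 : Pt F := Projectivization.mk F ![0, 0, 1] (by
  intro hc
  have h2 := congrFun hc 2
  simp at h2)

/-- A collineation of `PG(2,q)`: the permutation of the point set induced by an
invertible `σ`-semilinear map of `F³` (written as an invertible matrix composed
with a field automorphism `σ`). -/
def IsCollineation (g : Pt F → Pt F) : Prop :=
  ∃ σ : F ≃+* F, ∃ M : Matrix (Fin 3) (Fin 3) F, IsUnit M.det ∧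
    ∀ (v : Fin 3 → F) (hv : v ≠ 0) (hv' : M.mulVec (fun i => σ (v i)) ≠ 0),
      g (Projectivization.mk F v hv) = Projectivization.mk F (M.mulVec (fun i => σ (v i))) hv'

/-- A closed set of conics `{F_{a(λ), b(λ), λ} : λ ∈ Λ}` in `PG(2,q)`, `q = 2^h`. -/
def IsClosedConicSet (h : ℕ) (Λ : Finset F) (a b : F → F) : Prop :=
  (0 : F) ∉ Λ ∧ (∀ l ∈ Λ, tr F h (a l * b l) = 1) ∧
    ∀ l ∈ Λ, ∀ l' ∈ Λ, l ≠ l' →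
      l + l' ∈ Λ ∧ a (l + l') = (a l * l + a l' * l') / (l + l') ∧
        b (l + l') = (b l * l + b l' * l') / (l + l')

/-- The point set of a (Mathon) arc obtained from a family of conics: the union of
the conics together with the common nucleus `(0,0,1)`. -/
def mathonSet (Λ : Finset F) (a b : F → F) : Set (Pt F) :=
  {pt001 F} ∪ ⋃ l ∈ Λ, conicSet F (a l) (b l) l

/-- The Denniston point set determined by `α` and a set `A ⊆ GF(q)`. -/
def dennistonSet (a : F) (A : Set F) : Set (Pt F) :=
  {pt001 F} ∪ ⋃ l ∈ A \ {0}, conicSet F a 1 l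

/-- A degree 4 maximal arc of Denniston type: the image under a collineation of
`{(0,0,1)} ∪ ⋃_{λ ∈ A \ {0}} F_{α,1,λ}` with `Tr(α) = 1` and `A` an additive
subgroup of order 4. -/
def IsDenniston4 (h : ℕ) (K : Set (Pt F)) : Prop :=
  ∃ a : F, tr F h a = 1 ∧ ∃ A : AddSubgroup F, Nat.card A = 4 ∧
    ∃ g : Pt F → Pt F, IsCollineation F g ∧ g '' dennistonSet F a (A : Set F) = K

/-- `C` is a nondegenerate conic of `PG(2,q)` with nucleus `n`: the zero set of a
nonzero quadratic form, consisting of exactly `q+1` points no three of which are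
collinear, all of whose tangent lines pass through `n`. -/
def IsConicWithNucleus (C : Set (Pt F)) (n : Pt F) : Prop :=
  (∃ a b c d e f : F, ¬(a = 0 ∧ b = 0 ∧ c = 0 ∧ d = 0 ∧ e = 0 ∧ f = 0) ∧
      C = {P | a * P.rep 0 ^ 2 + b * P.rep 1 ^ 2 + c * P.rep 2 ^ 2 +
        d * P.rep 0 * P.rep 1 + e * P.rep 0 * P.rep 2 + f * P.rep 1 * P.rep 2 = 0}) ∧
    C.ncard = Fintype.card F + 1 ∧
    (∀ L : Set (Pt F), IsLine F L → (C ∩ L).ncard ≤ 2) ∧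
    (∀ L : Set (Pt F), IsLine F L → (C ∩ L).ncard = 1 → n ∈ L)

/-- A maximal arc of degree `d` of Mathon type in `PG(2,q)`, `q = 2^h`. -/
def IsMathonType (h : ℕ) (K : Set (Pt F)) (d : ℕ) : Prop :=
  IsMaximalArc F K d ∧
    ∃ g : Pt F → Pt F, IsCollineation F g ∧ ∃ (Λ : Finset F) (a b : F → F),
      IsClosedConicSet F h Λ a b ∧ Λ.card + 1 = d ∧ g '' K = mathonSet F Λ a b

/-- A maximal arc of degree `d` of Mathon type in `PG(2,q)` with nucleus `n`
(the preimage of `(0,0,1)` under a collineation realizing the Mathon description). -/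
def IsMathonWithNucleus (h : ℕ) (K : Set (Pt F)) (d : ℕ) (n : Pt F) : Prop :=
  IsMaximalArc F K d ∧
    ∃ g : Pt F → Pt F, IsCollineation F g ∧ g n = pt001 F ∧
      ∃ (Λ : Finset F) (a b : F → F),
        IsClosedConicSet F h Λ a b ∧ Λ.card + 1 = d ∧ g '' K = mathonSet F Λ a b

/-- A maximal arc of Denniston type: Mathon type where the closed set of conics can
be chosen with `α` and `β` constant. -/
def IsDennistonType (h : ℕ) (K : Set (Pt F)) : Prop :=
  ∃ g : Pt F → Pt F, IsCollineation F g ∧ ∃ (a b : F) (Λ : Finset F),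
    IsClosedConicSet F h Λ (fun _ => a) (fun _ => b) ∧
    g '' K = mathonSet F Λ (fun _ => a) (fun _ => b)

/-- A proper Mathon arc of degree `d`: a Mathon arc that is not of Denniston type. -/
def IsProperMathon (h : ℕ) (K : Set (Pt F)) (d : ℕ) : Prop :=
  IsMathonType F h K d ∧ ¬ IsDennistonType F h K

end MaxArc

namespace S6
open MaxArc
variable {F : Type} [Field F] [Fintype F]

theorem char2 {h : ℕ} (hcard : Fintype.card F = 2 ^ h) : CharP F 2 := by
  haveI := ringChar.charP F
  obtain ⟨n, hp, hc⟩ := FiniteField.card F (ringChar F)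
  have hdvd : ringChar F ∣ 2 ^ h := by
    rw [← hcard, hc]; exact dvd_pow_self _ n.pos.ne'
  have : ringChar F = 2 :=
    (Nat.prime_dvd_prime_iff_eq hp Nat.prime_two).mp (hp.dvd_of_dvd_pow hdvd)
  exact this ▸ ringChar.charP F

theorem hpos {h : ℕ} (hcard : Fintype.card F = 2 ^ h) : 1 ≤ h := by
  rcases Nat.eq_zero_or_pos h with h0 | h1
  · exfalso; rw [h0, pow_zero] at hcard
    exact absurd hcard (Fintype.one_lt_card.ne')
  · exact h1

omit [Fintype F] in
theorem tr_zero (h : ℕ) : tr F h 0 = 0 := by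
  simp [tr, zero_pow, pow_ne_zero]

omit [Fintype F] in
theorem tr_add [CharP F 2] (h : ℕ) (x y : F) :
    tr F h (x + y) = tr F h x + tr F h y := by
  haveI : Fact (Nat.Prime 2) := ⟨Nat.prime_two⟩
  unfold tr
  rw [← Finset.sum_add_distrib]
  exact Finset.sum_congr rfl fun i _ => add_pow_char_pow x y 2 i

theorem tr_sq {h : ℕ} (hcard : Fintype.card F = 2 ^ h) (x : F) :
    tr F h (x * x) = tr F h x := by
  haveI := char2 hcard
  have e1 : ∀ i : ℕ, (x * x) ^ 2 ^ i = x ^ 2 ^ (i + 1) := by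
    intro i; rw [← sq, ← pow_mul, pow_succ, mul_comm (2^i) 2, pow_mul]
  unfold tr
  rw [Finset.sum_congr rfl fun i _ => e1 i]
  have e2 : ∑ i ∈ Finset.range (h+1), x ^ 2 ^ i
      = (∑ i ∈ Finset.range h, x ^ 2 ^ (i+1)) + x ^ 2 ^ 0 :=
    Finset.sum_range_succ' _ h
  have e3 : ∑ i ∈ Finset.range (h+1), x ^ 2 ^ i
      = (∑ i ∈ Finset.range h, x ^ 2 ^ i) + x ^ 2 ^ h :=
    Finset.sum_range_succ _ h
  have e4 : x ^ 2 ^ h = x := by rw [← hcard]; exact FiniteField.pow_card x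
  have e5 := e2.symm.trans e3
  rw [e4, pow_zero, pow_one] at e5
  exact add_right_cancel e5

theorem tr_val {h : ℕ} (hcard : Fintype.card F = 2 ^ h) (x : F) :
    tr F h x = 0 ∨ tr F h x = 1 := by
  haveI := char2 hcard
  haveI : Fact (Nat.Prime 2) := ⟨Nat.prime_two⟩
  have hs : tr F h x * tr F h x = tr F h x := by
    have e0 : tr F h x * tr F h x = tr F h (x * x) := by
      unfold tr
      rw [← sq, sum_pow_char, Finset.sum_congr rfl]
      intro i _
      simp [← sq, ← pow_mul, Nat.mul_comm]
    rw [e0, tr_sq hcard]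
  have h0 : tr F h x * (tr F h x - 1) = 0 := by rw [mul_sub, hs]; ring
  rcases mul_eq_zero.mp h0 with h1 | h1
  · exact Or.inl h1
  · exact Or.inr (sub_eq_zero.mp h1)

/-- Artin–Schreier: elements of trace zero are of the form `s² + s`. -/
theorem artin_schreier {h : ℕ} (hcard : Fintype.card F = 2 ^ h) {c : F}
    (hc : tr F h c = 0) : ∃ s : F, s * s + s = c := by
  haveI := char2 hcard
  have h2 : (2 : F) = 0 := by exact_mod_cast CharP.cast_eq_zero F 2
  have h1 : (1 : F) ≠ 0 := one_ne_zero
  set φ : F → F := fun x => x * x + x with hφ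
  have hfib : ∀ x z : F, φ z = φ x ↔ z = x ∨ z = x + 1 := by
    intro x z
    simp only [hφ]
    constructor
    · intro hzx
      have key : (z + x) * (z + x + 1) = 0 := by
        linear_combination hzx + (x * z + x ^ 2 + x) * h2
      rcases mul_eq_zero.mp key with h3 | h3
      · exact Or.inl (by linear_combination h3 - x * h2)
      · exact Or.inr (by linear_combination h3 - (x + 1) * h2)
    · rintro (rfl | rfl)
      · rfl
      · linear_combination (x + 1) * h2
  set I : Finset F := Finset.univ.image φ with hI
  set ker : Finset F := Finset.univ.filter (fun x => tr F h x = 0) with hker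
  have hcount : (Finset.univ : Finset F).card
      = ∑ y ∈ I, (Finset.univ.filter fun x => φ x = y).card :=
    Finset.card_eq_sum_card_image φ Finset.univ
  have hfib2 : ∀ y ∈ I, (Finset.univ.filter fun x => φ x = y).card = 2 := by
    intro y hy
    obtain ⟨x, -, rfl⟩ := Finset.mem_image.mp hy
    have hset : (Finset.univ.filter fun z => φ z = φ x) = {x, x + 1} := by
      ext z
      simp only [Finset.mem_filter, Finset.mem_univ, true_and, Finset.mem_insert,
        Finset.mem_singleton]
      exact hfib x z
    rw [hset, Finset.card_insert_of_notMem, Finset.card_singleton]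
    simp only [Finset.mem_singleton]
    intro hx
    exact h1 (by linear_combination hx.symm)
  have hIcard : 2 * I.card = 2 ^ h := by
    have : (Finset.univ : Finset F).card = 2 * I.card := by
      rw [hcount, Finset.sum_congr rfl hfib2, Finset.sum_const, smul_eq_mul, mul_comm]
    rw [← this, Finset.card_univ, hcard]
  have hIker : I ⊆ ker := by
    intro y hy
    obtain ⟨x, -, rfl⟩ := Finset.mem_image.mp hy
    simp only [hker, Finset.mem_filter, Finset.mem_univ, true_and]
    show tr F h (x * x + x) = 0
    rw [tr_add, tr_sq hcard]
    linear_combination (tr F h x) * h2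
  -- polynomial bound on the kernel of the trace
  set p : Polynomial F := ∑ i ∈ Finset.range h, Polynomial.X ^ (2 ^ i) with hp
  have heval : ∀ x : F, p.eval x = tr F h x := by
    intro x
    simp [hp, tr, Polynomial.eval_finset_sum]
  have hpne : p ≠ 0 := by
    intro h0
    have hco : p.coeff 1 = 1 := by
      rw [hp, Polynomial.finset_sum_coeff]
      rw [Finset.sum_eq_single 0]
      · simp
      · intro i hi hne
        rw [Polynomial.coeff_X_pow]
        have : (2 : ℕ) ^ i ≠ 1 := Nat.ne_of_gt (Nat.one_lt_two_pow hne)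
        simp [this.symm]
      · intro habs
        exact absurd (Finset.mem_range.mpr (hpos hcard)) habs
    rw [h0] at hco
    simp at hco
  have hdeg : p.natDegree ≤ 2 ^ (h - 1) := by
    rw [hp]
    apply Polynomial.natDegree_sum_le_of_forall_le
    intro i hi
    rw [Polynomial.natDegree_X_pow]
    exact Nat.pow_le_pow_right (by norm_num) (by
      have := Finset.mem_range.mp hi; omega)
  have hker_le : ker.card ≤ 2 ^ (h - 1) := by
    have hsub : ker ⊆ p.roots.toFinset := by
      intro x hx
      rw [Multiset.mem_toFinset, Polynomial.mem_roots']
      exact ⟨hpne, by rw [Polynomial.IsRoot, heval]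
                      exact (Finset.mem_filter.mp hx).2⟩
    calc ker.card ≤ p.roots.toFinset.card := Finset.card_le_card hsub
      _ ≤ Multiset.card p.roots := p.roots.toFinset_card_le
      _ ≤ p.natDegree := p.card_roots'
      _ ≤ 2 ^ (h - 1) := hdeg
  have hpow : 2 ^ h = 2 * 2 ^ (h - 1) := by
    have h1' := hpos hcard
    conv_lhs => rw [show h = (h - 1) + 1 by omega]
    rw [pow_succ, mul_comm]
  have hIk : I = ker := by
    apply Finset.eq_of_subset_of_card_le hIker
    omega
  have hcker : c ∈ ker := by
    simp only [hker, Finset.mem_filter, Finset.mem_univ, true_and]; exact hc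
  rw [← hIk] at hcker
  obtain ⟨s, -, hs⟩ := Finset.mem_image.mp hcker
  exact ⟨s, hs⟩

theorem sq_eq {x y : F} [CharP F 2] (hxy : x * x = y * y) : x = y := by
  have h2 : (2 : F) = 0 := by exact_mod_cast CharP.cast_eq_zero F 2
  have : (x + y) * (x + y) = 0 := by linear_combination hxy + (x * y + y ^ 2) * h2
  have h0 : x + y = 0 := by
    rcases mul_eq_zero.mp this with h | h <;> exact h
  linear_combination h0 - y * h2

theorem sq_surj {h : ℕ} (hcard : Fintype.card F = 2 ^ h) (y : F) : ∃ z : F, z * z = y := by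
  haveI := char2 hcard
  have hinj : Function.Injective (fun z : F => z * z) := fun a b hab => sq_eq hab
  exact Finite.surjective_of_injective hinj y

/-- If `Tr(AB) = 1` then `A x² + x y + B y² = 0` has only the trivial solution. -/
theorem quad_no_root {h : ℕ} (hcard : Fintype.card F = 2 ^ h) {A B : F}
    (htr : tr F h (A * B) = 1) {x y : F}
    (heq : A * x ^ 2 + x * y + B * y ^ 2 = 0) : x = 0 ∧ y = 0 := by
  haveI := char2 hcard
  have h2 : (2 : F) = 0 := by exact_mod_cast CharP.cast_eq_zero F 2
  have hA : A ≠ 0 := by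
    rintro rfl
    rw [zero_mul, tr_zero] at htr
    exact one_ne_zero htr.symm
  have hy : y = 0 := by
    by_contra hy
    -- t := x / y is a root of A t² + t + B
    have hroot : A * (x / y) ^ 2 + (x / y) + B = 0 := by
      field_simp
      linear_combination heq
    -- then (A t)² + (A t) = A B has a solution, contradicting the trace value
    have hsol : (A * (x / y)) * (A * (x / y)) + (A * (x / y)) = A * B := by
      linear_combination A * hroot - A * B * h2
    have : tr F h (A * B) = 0 := by
      rw [← hsol]
      show tr F h (A * (x / y) * (A * (x / y)) + A * (x / y)) = 0
      rw [tr_add, tr_sq hcard]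
      linear_combination (tr F h (A * (x / y))) * h2
    rw [this] at htr
    exact one_ne_zero htr.symm
  refine ⟨?_, hy⟩
  rw [hy] at heq
  have : A * x ^ 2 = 0 := by linear_combination heq
  rcases mul_eq_zero.mp this with h | h
  · exact absurd h hA
  · exact pow_eq_zero_iff (by norm_num) |>.mp h

/-- If `Tr(AB) = 0` then the projective conic `A x² + x y + B y² = 0` has exactly
two projective roots, given here explicitly. -/
theorem quad_roots {h : ℕ} (hcard : Fintype.card F = 2 ^ h) {A B : F}
    (htr : tr F h (A * B) = 0) :
    ∃ x₁ y₁ x₂ y₂ : F, x₁ * y₂ ≠ x₂ * y₁ ∧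
      A * x₁ ^ 2 + x₁ * y₁ + B * y₁ ^ 2 = 0 ∧
      A * x₂ ^ 2 + x₂ * y₂ + B * y₂ ^ 2 = 0 ∧
      ∀ x y : F, ¬(x = 0 ∧ y = 0) → A * x ^ 2 + x * y + B * y ^ 2 = 0 →
        ∃ c : F, c ≠ 0 ∧ ((x = c * x₁ ∧ y = c * y₁) ∨ (x = c * x₂ ∧ y = c * y₂)) := by
  haveI := char2 hcard
  have h2 : (2 : F) = 0 := by exact_mod_cast CharP.cast_eq_zero F 2
  by_cases hA : A = 0
  · subst hA
    refine ⟨1, 0, B, 1, by simp, by ring, by linear_combination B * h2, ?_⟩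
    intro x y hxy heq
    by_cases hy : y = 0
    · subst hy
      exact ⟨x, fun hx => hxy ⟨hx, rfl⟩, Or.inl ⟨by ring, by ring⟩⟩
    · refine ⟨y, hy, Or.inr ⟨?_, by ring⟩⟩
      have hfac : y * (x + B * y) = 0 := by linear_combination heq
      rcases mul_eq_zero.mp hfac with hcase | hcase
      · exact absurd hcase hy
      · linear_combination hcase - B * y * h2
  · obtain ⟨s, hs⟩ := artin_schreier hcard htr
    have hAt1 : A * (s / A) = s := by field_simp
    have hAt2 : A * ((s + 1) / A) = s + 1 := by field_simp
    refine ⟨s / A, 1, (s + 1) / A, 1, ?_, ?_, ?_, ?_⟩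
    · intro hcontra
      rw [mul_one, mul_one, div_eq_div_iff hA hA] at hcontra
      have := mul_right_cancel₀ hA hcontra
      exact one_ne_zero (left_eq_add.mp this)
    · have hkey : A ^ 2 * (A * (s / A) ^ 2 + (s / A) * 1 + B * 1 ^ 2) = 0 := by
        have e : A ^ 2 * (A * (s / A) ^ 2 + (s / A) * 1 + B * 1 ^ 2)
            = A * ((A * (s / A)) * (A * (s / A))) + A * (A * (s / A)) + A ^ 2 * B := by
          ring
        rw [e, hAt1]
        linear_combination A * hs + A ^ 2 * B * h2
      exact (mul_eq_zero.mp hkey).resolve_left (pow_ne_zero 2 hA)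
    · have hkey : A ^ 2 * (A * ((s + 1) / A) ^ 2 + ((s + 1) / A) * 1 + B * 1 ^ 2) = 0 := by
        have e : A ^ 2 * (A * ((s + 1) / A) ^ 2 + ((s + 1) / A) * 1 + B * 1 ^ 2)
            = A * ((A * ((s + 1) / A)) * (A * ((s + 1) / A)))
              + A * (A * ((s + 1) / A)) + A ^ 2 * B := by
          ring
        rw [e, hAt2]
        linear_combination A * hs + (A ^ 2 * B + A * s + A) * h2
      exact (mul_eq_zero.mp hkey).resolve_left (pow_ne_zero 2 hA)
    · intro x y hxy heq
      by_cases hy : y = 0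
      · exfalso
        rw [hy] at heq
        have hx2 : A * x ^ 2 = 0 := by linear_combination heq
        rcases mul_eq_zero.mp hx2 with hcase | hcase
        · exact hA hcase
        · exact hxy ⟨pow_eq_zero_iff (by norm_num) |>.mp hcase, hy⟩
      · refine ⟨y, hy, ?_⟩
        have htp : (x / y) * y = x := div_mul_cancel₀ x hy
        have hq : y ^ 2 * (A * (x / y) ^ 2 + (x / y) + B) = 0 := by
          calc y ^ 2 * (A * (x / y) ^ 2 + (x / y) + B)
              = A * ((x / y) * y) ^ 2 + ((x / y) * y) * y + B * y ^ 2 := by ring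
            _ = 0 := by rw [htp]; exact heq
        have hq0 : A * (x / y) ^ 2 + (x / y) + B = 0 :=
          (mul_eq_zero.mp hq).resolve_left (pow_ne_zero 2 hy)
        have hfac : (A * (x / y) + s) * (A * (x / y) + (s + 1)) = 0 := by
          linear_combination A * hq0 + hs + (A * (x / y) * s) * h2
        rcases mul_eq_zero.mp hfac with hcase | hcase
        · left
          constructor
          · have ht : x / y = s / A := by
              rw [eq_div_iff hA]
              linear_combination hcase - s * h2
            rw [← ht, mul_comm, htp]
          · ring
        · right
          constructor
          · have ht : x / y = (s + 1) / A := by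
              rw [eq_div_iff hA]
              linear_combination hcase - (s + 1) * h2
            rw [← ht, mul_comm, htp]
          · ring


section Plumbing
open Projectivization

theorem exists_rep (v : Fin 3 → F) (hv : v ≠ 0) :
    ∃ c : F, c ≠ 0 ∧ (Projectivization.mk F v hv).rep = c • v := by
  obtain ⟨u, hu⟩ := Projectivization.exists_smul_eq_mk_rep F v hv
  exact ⟨(u : F), u.ne_zero, by rw [← hu]; rfl⟩

theorem mem_conic_iff {a b l : F} (v : Fin 3 → F) (hv : v ≠ 0) :
    Projectivization.mk F v hv ∈ conicSet F a b l ↔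
      a * v 0 ^ 2 + v 0 * v 1 + b * v 1 ^ 2 + l * v 2 ^ 2 = 0 := by
  obtain ⟨c, hc, hrep⟩ := exists_rep v hv
  show a * _ ^ 2 + _ * _ + b * _ ^ 2 + l * _ ^ 2 = 0 ↔ _
  rw [hrep]
  simp only [Pi.smul_apply, smul_eq_mul]
  constructor
  · intro hz
    have : c ^ 2 * (a * v 0 ^ 2 + v 0 * v 1 + b * v 1 ^ 2 + l * v 2 ^ 2) = 0 := by
      linear_combination hz
    rcases mul_eq_zero.mp this with hcase | hcase
    · exact absurd (pow_eq_zero_iff (by norm_num) |>.mp hcase) hc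
    · exact hcase
  · intro hz
    linear_combination c ^ 2 * hz

theorem mem_lineSet_iff {u v w : F} (x : Fin 3 → F) (hx : x ≠ 0) :
    Projectivization.mk F x hx ∈ {P : Pt F | u * P.rep 0 + v * P.rep 1 + w * P.rep 2 = 0} ↔
      u * x 0 + v * x 1 + w * x 2 = 0 := by
  obtain ⟨c, hc, hrep⟩ := exists_rep x hx
  show u * _ + v * _ + w * _ = 0 ↔ _
  rw [hrep]
  simp only [Pi.smul_apply, smul_eq_mul]
  constructor
  · intro hz
    have : c * (u * x 0 + v * x 1 + w * x 2) = 0 := by linear_combination hz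
    rcases mul_eq_zero.mp this with hcase | hcase
    · exact absurd hcase hc
    · exact hcase
  · intro hz
    linear_combination c * hz

theorem mem_nlineSet_iff {u v : F} (x : Fin 3 → F) (hx : x ≠ 0) :
    Projectivization.mk F x hx ∈ {P : Pt F | u * P.rep 0 + v * P.rep 1 + P.rep 2 = 0} ↔
      u * x 0 + v * x 1 + x 2 = 0 := by
  obtain ⟨c, hc, hrep⟩ := exists_rep x hx
  show u * _ + v * _ + _ = 0 ↔ _
  rw [hrep]
  simp only [Pi.smul_apply, smul_eq_mul]
  constructor
  · intro hz
    have : c * (u * x 0 + v * x 1 + x 2) = 0 := by linear_combination hz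
    rcases mul_eq_zero.mp this with hcase | hcase
    · exact absurd hcase hc
    · exact hcase
  · intro hz
    linear_combination c * hz

theorem vec_ne_zero_of (x : Fin 3 → F) (i : Fin 3) (hi : x i ≠ 0) : x ≠ 0 :=
  fun hc => hi (by rw [hc]; rfl)

theorem vec3_eq_zero {x : Fin 3 → F} (h0 : x 0 = 0) (h1 : x 1 = 0) (h2 : x 2 = 0) : x = 0 := by
  funext i
  fin_cases i <;> assumption

/-- Membership of `pt001` in a conic. -/
theorem pt001_mem_conic_iff {a b l : F} : pt001 F ∈ conicSet F a b l ↔ l = 0 := by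
  rw [pt001, mem_conic_iff]
  simp

/-- Membership of `pt001` in a line. -/
theorem pt001_mem_lineSet_iff {u v w : F} :
    pt001 F ∈ {P : Pt F | u * P.rep 0 + v * P.rep 1 + w * P.rep 2 = 0} ↔ w = 0 := by
  rw [pt001, mem_lineSet_iff]
  simp

end Plumbing



/-- Two distinct conics whose composition satisfies the trace conditions are disjoint. -/
theorem conics_disjoint {h : ℕ} (hcard : Fintype.card F = 2 ^ h)
    {al bl am bm aν bν l m : F}
    (hne : l ≠ m) (hl0 : l ≠ 0)
    (hsν : (l + m) * aν = al * l + am * m)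
    (htν : (l + m) * bν = bl * l + bm * m)
    (htrl : tr F h (al * bl) = 1) (htrm : tr F h (am * bm) = 1)
    (htrν : tr F h (aν * bν) = 1) :
    conicSet F al bl l ∩ conicSet F am bm m = ∅ := by
  haveI := char2 hcard
  have h2 : (2 : F) = 0 := by exact_mod_cast CharP.cast_eq_zero F 2
  have hν : l + m ≠ 0 := by
    intro hc
    exact hne (by linear_combination hc - m * h2)
  have hA'B' : (l + m) ^ 2 * ((al + am + aν) * (bl + bm + bν))
      = (l + m) ^ 2 * (al * bl + am * bm + aν * bν) := by
    linear_combination ((l + m) * (bl + bm)) * hsν + ((l + m) * (al + am)) * htν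
      + ((l + m) * ((l + m) * (al * bm + am * bl) + l * al * bl + m * am * bm)) * h2
  have hAB : (al + am + aν) * (bl + bm + bν) = al * bl + am * bm + aν * bν :=
    mul_left_cancel₀ (pow_ne_zero 2 hν) hA'B'
  have htrA : tr F h ((al + am + aν) * (bl + bm + bν)) = 1 := by
    rw [hAB, tr_add, tr_add, htrl, htrm, htrν]
    linear_combination h2
  rw [Set.eq_empty_iff_forall_notMem]
  rintro P ⟨hP1, hP2⟩
  simp only [conicSet, Set.mem_setOf_eq] at hP1 hP2
  have hA'rel : (l + m) * (al + am + aν) = m * al + l * am := by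
    linear_combination hsν + (l * al + m * am) * h2
  have hB'rel : (l + m) * (bl + bm + bν) = m * bl + l * bm := by
    linear_combination htν + (l * bl + m * bm) * h2
  have heq : (l + m) * ((al + am + aν) * P.rep 0 ^ 2 + P.rep 0 * P.rep 1
      + (bl + bm + bν) * P.rep 1 ^ 2) = 0 := by
    linear_combination m * hP1 + l * hP2 + (P.rep 0 ^ 2) * hA'rel
      + (P.rep 1 ^ 2) * hB'rel - l * m * (P.rep 2 ^ 2) * h2
  have h0 : (al + am + aν) * P.rep 0 ^ 2 + P.rep 0 * P.rep 1
      + (bl + bm + bν) * P.rep 1 ^ 2 = 0 :=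
    (mul_eq_zero.mp heq).resolve_left hν
  obtain ⟨hw0, hw1⟩ := quad_no_root hcard htrA h0
  have hw2 : P.rep 2 = 0 := by
    rw [hw0, hw1] at hP1
    have : l * P.rep 2 ^ 2 = 0 := by linear_combination hP1
    rcases mul_eq_zero.mp this with hcase | hcase
    · exact absurd hcase hl0
    · exact pow_eq_zero_iff (by norm_num) |>.mp hcase
  exact P.rep_nonzero (vec3_eq_zero hw0 hw1 hw2)



/-- A line `ux + vy + z = 0` (not through the nucleus) misses the conic when the
trace is 1. -/
theorem conic_nline_empty {h : ℕ} (hcard : Fintype.card F = 2 ^ h) {a b l u v : F}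
    (htr : tr F h ((a + l * u ^ 2) * (b + l * v ^ 2)) = 1) :
    conicSet F a b l ∩ {P : Pt F | u * P.rep 0 + v * P.rep 1 + P.rep 2 = 0} = ∅ := by
  haveI := char2 hcard
  have h2 : (2 : F) = 0 := by exact_mod_cast CharP.cast_eq_zero F 2
  rw [Set.eq_empty_iff_forall_notMem]
  rintro P ⟨hP1, hP2⟩
  simp only [conicSet, Set.mem_setOf_eq] at hP1 hP2
  have hz : P.rep 2 = u * P.rep 0 + v * P.rep 1 := by
    linear_combination hP2 - (u * P.rep 0 + v * P.rep 1) * h2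
  have hsq : P.rep 2 ^ 2 = (u * P.rep 0 + v * P.rep 1) ^ 2 := by rw [hz]
  have hq : (a + l * u ^ 2) * P.rep 0 ^ 2 + P.rep 0 * P.rep 1
      + (b + l * v ^ 2) * P.rep 1 ^ 2 = 0 := by
    linear_combination hP1 - l * hsq - l * u * v * P.rep 0 * P.rep 1 * h2
  obtain ⟨hw0, hw1⟩ := quad_no_root hcard htr hq
  have hw2 : P.rep 2 = 0 := by rw [hz, hw0, hw1]; ring
  exact P.rep_nonzero (vec3_eq_zero hw0 hw1 hw2)

/-- A line `ux + vy + z = 0` meets the conic in exactly two points when the trace is 0. -/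
theorem conic_nline_pair {h : ℕ} (hcard : Fintype.card F = 2 ^ h) {a b l u v : F}
    (htr : tr F h ((a + l * u ^ 2) * (b + l * v ^ 2)) = 0) :
    ∃ P₁ P₂ : Pt F, P₁ ≠ P₂ ∧
      conicSet F a b l ∩ {P : Pt F | u * P.rep 0 + v * P.rep 1 + P.rep 2 = 0} = {P₁, P₂} := by
  haveI := char2 hcard
  have h2 : (2 : F) = 0 := by exact_mod_cast CharP.cast_eq_zero F 2
  obtain ⟨x₁, y₁, x₂, y₂, hdet, hr1, hr2, hcover⟩ := quad_roots hcard htr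
  have hne1 : ¬(x₁ = 0 ∧ y₁ = 0) := by
    rintro ⟨rfl, rfl⟩; exact hdet (by ring)
  have hne2 : ¬(x₂ = 0 ∧ y₂ = 0) := by
    rintro ⟨rfl, rfl⟩; exact hdet (by ring)
  have hv1 : (![x₁, y₁, u * x₁ + v * y₁] : Fin 3 → F) ≠ 0 := by
    intro hc
    exact hne1 ⟨by simpa using congrFun hc 0, by simpa using congrFun hc 1⟩
  have hv2 : (![x₂, y₂, u * x₂ + v * y₂] : Fin 3 → F) ≠ 0 := by
    intro hc
    exact hne2 ⟨by simpa using congrFun hc 0, by simpa using congrFun hc 1⟩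
  refine ⟨Projectivization.mk F _ hv1, Projectivization.mk F _ hv2, ?_, ?_⟩
  · intro hc
    rw [Projectivization.mk_eq_mk_iff'] at hc
    obtain ⟨c, hc⟩ := hc
    have e0 : x₁ = c * x₂ := by simpa using (congrFun hc 0).symm
    have e1 : y₁ = c * y₂ := by simpa using (congrFun hc 1).symm
    exact hdet (by rw [e0, e1]; ring)
  · ext P
    constructor
    · rintro ⟨hP1, hP2⟩
      simp only [conicSet, Set.mem_setOf_eq] at hP1 hP2
      have hz : P.rep 2 = u * P.rep 0 + v * P.rep 1 := by
        linear_combination hP2 - (u * P.rep 0 + v * P.rep 1) * h2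
      have hsq : P.rep 2 ^ 2 = (u * P.rep 0 + v * P.rep 1) ^ 2 := by rw [hz]
      have hq : (a + l * u ^ 2) * P.rep 0 ^ 2 + P.rep 0 * P.rep 1
          + (b + l * v ^ 2) * P.rep 1 ^ 2 = 0 := by
        linear_combination hP1 - l * hsq - l * u * v * P.rep 0 * P.rep 1 * h2
      have hw01 : ¬(P.rep 0 = 0 ∧ P.rep 1 = 0) := by
        rintro ⟨e0, e1⟩
        exact P.rep_nonzero (vec3_eq_zero e0 e1 (by rw [hz, e0, e1]; ring))
      obtain ⟨c, hc0, hcc⟩ := hcover _ _ hw01 hq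
      have hPmk : P = Projectivization.mk F P.rep P.rep_nonzero := (Projectivization.mk_rep P).symm
      simp only [Set.mem_insert_iff, Set.mem_singleton_iff]
      rcases hcc with ⟨e0, e1⟩ | ⟨e0, e1⟩
      · left
        rw [hPmk, Projectivization.mk_eq_mk_iff']
        refine ⟨c, funext fun i => ?_⟩
        fin_cases i
        · show c * x₁ = P.rep 0
          exact e0.symm
        · show c * y₁ = P.rep 1
          exact e1.symm
        · show c * (u * x₁ + v * y₁) = P.rep 2
          rw [hz, e0, e1]; ring
      · right
        rw [hPmk, Projectivization.mk_eq_mk_iff']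
        refine ⟨c, funext fun i => ?_⟩
        fin_cases i
        · show c * x₂ = P.rep 0
          exact e0.symm
        · show c * y₂ = P.rep 1
          exact e1.symm
        · show c * (u * x₂ + v * y₂) = P.rep 2
          rw [hz, e0, e1]; ring
    · intro hP
      have hmem : ∀ (x y : F) (hv : (![x, y, u * x + v * y] : Fin 3 → F) ≠ 0),
          (a + l * u ^ 2) * x ^ 2 + x * y + (b + l * v ^ 2) * y ^ 2 = 0 →
          Projectivization.mk F _ hv ∈ conicSet F a b l ∩
            {P : Pt F | u * P.rep 0 + v * P.rep 1 + P.rep 2 = 0} := by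
        intro x y hv hroot
        constructor
        · rw [mem_conic_iff]
          simp only [Matrix.cons_val_zero, Matrix.cons_val_one, Matrix.head_cons,
            Matrix.cons_val_two, Matrix.tail_cons]
          linear_combination hroot + l * u * v * x * y * h2
        · rw [mem_nlineSet_iff]
          simp only [Matrix.cons_val_zero, Matrix.cons_val_one, Matrix.head_cons,
            Matrix.cons_val_two, Matrix.tail_cons]
          linear_combination (u * x + v * y) * h2
      rcases hP with rfl | hP
      · exact hmem x₁ y₁ hv1 hr1
      · rw [Set.mem_singleton_iff] at hP
        rw [hP]
        exact hmem x₂ y₂ hv2 hr2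

/-- A line through the nucleus meets each conic in exactly one point. -/
theorem conic_n0line_single {h : ℕ} (hcard : Fintype.card F = 2 ^ h) {a b l u v : F}
    (hl0 : l ≠ 0) (huv : ¬(u = 0 ∧ v = 0)) :
    ∃ P₀ : Pt F, conicSet F a b l ∩
      {P : Pt F | u * P.rep 0 + v * P.rep 1 + 0 * P.rep 2 = 0} = {P₀} := by
  haveI := char2 hcard
  have h2 : (2 : F) = 0 := by exact_mod_cast CharP.cast_eq_zero F 2
  obtain ⟨z₀, hz₀⟩ := sq_surj hcard ((a * v ^ 2 + v * u + b * u ^ 2) / l)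
  have hlz : l * (z₀ * z₀) = a * v ^ 2 + v * u + b * u ^ 2 := by
    rw [hz₀]; field_simp
  have hv0 : (![v, u, z₀] : Fin 3 → F) ≠ 0 := by
    intro hc
    exact huv ⟨by simpa using congrFun hc 1, by simpa using congrFun hc 0⟩
  refine ⟨Projectivization.mk F _ hv0, ?_⟩
  ext P
  constructor
  · rintro ⟨hP1, hP2⟩
    simp only [conicSet, Set.mem_setOf_eq] at hP1 hP2
    -- find c with rep = c • ![v, u, z₀]
    have key : ∃ c : F, c ≠ 0 ∧ P.rep 0 = c * v ∧ P.rep 1 = c * u := by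
      by_cases hu : u = 0
      · have hvne : v ≠ 0 := fun hv' => huv ⟨hu, hv'⟩
        have hw1 : P.rep 1 = 0 := by
          have : v * P.rep 1 = 0 := by
            rw [hu] at hP2; linear_combination hP2
          exact (mul_eq_zero.mp this).resolve_left hvne
        refine ⟨P.rep 0 / v, ?_, by field_simp, by rw [hu, hw1]; ring⟩
        intro hc
        have hw0 : P.rep 0 = 0 := by
          field_simp at hc; simpa using hc
        rw [hw0, hw1] at hP1
        have : l * P.rep 2 ^ 2 = 0 := by linear_combination hP1
        rcases mul_eq_zero.mp this with e | e
        · exact hl0 e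
        · exact P.rep_nonzero (vec3_eq_zero hw0 hw1 (pow_eq_zero_iff (by norm_num) |>.mp e))
      · have hw1 : P.rep 1 = (P.rep 1 / u) * u := by field_simp
        have hw0 : P.rep 0 = (P.rep 1 / u) * v := by
          have humul : u * P.rep 0 = v * P.rep 1 := by
            linear_combination hP2 - v * P.rep 1 * h2
          field_simp
          linear_combination humul
        refine ⟨P.rep 1 / u, ?_, hw0, hw1⟩
        intro hc
        rw [hc, zero_mul] at hw0 hw1
        rw [hw0, hw1] at hP1
        have : l * P.rep 2 ^ 2 = 0 := by linear_combination hP1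
        rcases mul_eq_zero.mp this with e | e
        · exact hl0 e
        · exact P.rep_nonzero (vec3_eq_zero hw0 hw1 (pow_eq_zero_iff (by norm_num) |>.mp e))
    obtain ⟨c, hc0, e0, e1⟩ := key
    have hw2 : P.rep 2 = c * z₀ := by
      apply sq_eq
      have hlsq : l * (P.rep 2 * P.rep 2) = l * ((c * z₀) * (c * z₀)) := by
        have expand : l * ((c * z₀) * (c * z₀)) = c ^ 2 * (l * (z₀ * z₀)) := by ring
        rw [expand, hlz]
        rw [e0, e1] at hP1
        linear_combination -hP1 + l * P.rep 2 ^ 2 * h2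
      exact mul_left_cancel₀ hl0 hlsq
    rw [Set.mem_singleton_iff, ← Projectivization.mk_rep P, Projectivization.mk_eq_mk_iff']
    refine ⟨c, funext fun i => ?_⟩
    fin_cases i
    · show c * v = P.rep 0
      exact e0.symm
    · show c * u = P.rep 1
      exact e1.symm
    · show c * z₀ = P.rep 2
      exact hw2.symm
  · intro hP
    rw [Set.mem_singleton_iff] at hP
    rw [hP]
    constructor
    · rw [mem_conic_iff]
      simp only [Matrix.cons_val_zero, Matrix.cons_val_one, Matrix.head_cons,
        Matrix.cons_val_two, Matrix.tail_cons]
      have : z₀ ^ 2 = z₀ * z₀ := sq z₀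
      linear_combination this * l + hlz + (a * v ^ 2 + v * u + b * u ^ 2) * h2
    · rw [mem_lineSet_iff]
      simp only [Matrix.cons_val_zero, Matrix.cons_val_one, Matrix.head_cons,
        Matrix.cons_val_two, Matrix.tail_cons]
      linear_combination (u * v) * h2



theorem ncard_biUnion {β : Type} [Finite β] (s : Finset F) (f : F → Set β)
    (hdisj : ∀ i ∈ s, ∀ j ∈ s, i ≠ j → f i ∩ f j = ∅) :
    (⋃ i ∈ s, f i).ncard = ∑ i ∈ s, (f i).ncard := by
  classical
  induction s using Finset.induction with
  | empty => simp
  | @insert c s ha ih =>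
    rw [Finset.set_biUnion_insert, Finset.sum_insert ha]
    rw [Set.ncard_union_eq ?_ (Set.toFinite _) (Set.toFinite _)]
    · rw [ih fun i hi j hj hij => hdisj i (Finset.mem_insert_of_mem hi)
        j (Finset.mem_insert_of_mem hj) hij]
    · rw [Set.disjoint_left]
      intro x hx hx'
      obtain ⟨i, hi, hxi⟩ := Set.mem_iUnion₂.mp hx'
      have hne : c ≠ i := fun hc => ha (hc ▸ hi)
      have := hdisj c (Finset.mem_insert_self c s) i (Finset.mem_insert_of_mem hi) hne
      exact absurd ⟨hx, hxi⟩ (this ▸ Set.notMem_empty x)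

/-- The key additivity of the secant indicator along the group structure. -/
theorem s_sum {h : ℕ} (hcard : Fintype.card F = 2 ^ h) {al bl am bm aν bν l m u v : F}
    (hsν : (l + m) * aν = al * l + am * m) (htν : (l + m) * bν = bl * l + bm * m)
    (htrl : tr F h (al * bl) = 1) (htrm : tr F h (am * bm) = 1)
    (htrν : tr F h (aν * bν) = 1) :
    tr F h ((al + l * u ^ 2) * (bl + l * v ^ 2))
      + tr F h ((am + m * u ^ 2) * (bm + m * v ^ 2))
      + tr F h ((aν + (l + m) * u ^ 2) * (bν + (l + m) * v ^ 2)) = 1 := by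
  haveI := char2 hcard
  have h2 : (2 : F) = 0 := by exact_mod_cast CharP.cast_eq_zero F 2
  have el : (al + l * u ^ 2) * (bl + l * v ^ 2)
      = al * bl + (u ^ 2 * (l * bl) + v ^ 2 * (l * al) + u ^ 2 * v ^ 2 * l ^ 2) := by ring
  have em : (am + m * u ^ 2) * (bm + m * v ^ 2)
      = am * bm + (u ^ 2 * (m * bm) + v ^ 2 * (m * am) + u ^ 2 * v ^ 2 * m ^ 2) := by ring
  have eν : (aν + (l + m) * u ^ 2) * (bν + (l + m) * v ^ 2)
      = aν * bν + (u ^ 2 * ((l + m) * bν) + v ^ 2 * ((l + m) * aν)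
          + u ^ 2 * v ^ 2 * (l + m) ^ 2) := by ring
  have tl : tr F h ((al + l * u ^ 2) * (bl + l * v ^ 2))
      = tr F h (al * bl)
        + tr F h (u ^ 2 * (l * bl) + v ^ 2 * (l * al) + u ^ 2 * v ^ 2 * l ^ 2) := by
    rw [el]; exact tr_add h _ _
  have tm : tr F h ((am + m * u ^ 2) * (bm + m * v ^ 2))
      = tr F h (am * bm)
        + tr F h (u ^ 2 * (m * bm) + v ^ 2 * (m * am) + u ^ 2 * v ^ 2 * m ^ 2) := by
    rw [em]; exact tr_add h _ _
  have tν : tr F h ((aν + (l + m) * u ^ 2) * (bν + (l + m) * v ^ 2))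
      = tr F h (aν * bν)
        + tr F h (u ^ 2 * ((l + m) * bν) + v ^ 2 * ((l + m) * aν)
            + u ^ 2 * v ^ 2 * (l + m) ^ 2) := by
    rw [eν]; exact tr_add h _ _
  rw [tl, tm, tν, htrl, htrm, htrν]
  have hg : (u ^ 2 * (l * bl) + v ^ 2 * (l * al) + u ^ 2 * v ^ 2 * l ^ 2)
      + (u ^ 2 * (m * bm) + v ^ 2 * (m * am) + u ^ 2 * v ^ 2 * m ^ 2)
      + (u ^ 2 * ((l + m) * bν) + v ^ 2 * ((l + m) * aν)
          + u ^ 2 * v ^ 2 * (l + m) ^ 2) = 0 := by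
    linear_combination u ^ 2 * htν + v ^ 2 * hsν
      + (u ^ 2 * (l * bl + m * bm) + v ^ 2 * (l * al + m * am)
          + u ^ 2 * v ^ 2 * (l ^ 2 + m ^ 2 + l * m)) * h2
  have hgsum : tr F h (u ^ 2 * (l * bl) + v ^ 2 * (l * al) + u ^ 2 * v ^ 2 * l ^ 2)
      + tr F h (u ^ 2 * (m * bm) + v ^ 2 * (m * am) + u ^ 2 * v ^ 2 * m ^ 2)
      + tr F h (u ^ 2 * ((l + m) * bν) + v ^ 2 * ((l + m) * aν)
          + u ^ 2 * v ^ 2 * (l + m) ^ 2) = 0 := by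
    rw [← tr_add, ← tr_add, hg, tr_zero]
  linear_combination hgsum + h2

/-- Counting lemma: an `F`-valued `{0,1}` function on a `2`-group support satisfying
`s(λ)+s(μ)+s(λ+μ) = 1` has zero set empty or of size `(|Λ|+1)/2`. -/
theorem half_count [CharP F 2] {Λ : Finset F} (h0 : (0 : F) ∉ Λ)
    (hgrp : ∀ l ∈ Λ, ∀ m ∈ Λ, l ≠ m → l + m ∈ Λ) (s : F → F)
    (hval : ∀ l ∈ Λ, s l = 0 ∨ s l = 1)
    (hadd : ∀ l ∈ Λ, ∀ m ∈ Λ, l ≠ m → s l + s m + s (l + m) = 1) :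
    (Λ.filter fun l => s l = 0).card = 0 ∨
      2 * (Λ.filter fun l => s l = 0).card = Λ.card + 1 := by
  classical
  have h2 : (2 : F) = 0 := by exact_mod_cast CharP.cast_eq_zero F 2
  set T0 := Λ.filter fun l => s l = 0 with hT0
  set T1 := Λ.filter fun l => ¬(s l = 0) with hT1
  rcases Finset.eq_empty_or_nonempty T0 with hemp | ⟨l0, hl0⟩
  · left; rw [hemp]; rfl
  · right
    have hl0Λ : l0 ∈ Λ := (Finset.mem_filter.mp hl0).1
    have hsl0 : s l0 = 0 := (Finset.mem_filter.mp hl0).2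
    have hcards : (T0.erase l0).card = T1.card := by
      apply Finset.card_bij' (fun l _ => l + l0) (fun m _ => m + l0)
      · intro l hl
        have hlne : l ≠ l0 := (Finset.mem_erase.mp hl).1
        have hlΛ : l ∈ Λ := (Finset.mem_filter.mp (Finset.mem_erase.mp hl).2).1
        have hsl : s l = 0 := (Finset.mem_filter.mp (Finset.mem_erase.mp hl).2).2
        rw [hT1, Finset.mem_filter]
        refine ⟨hgrp l hlΛ l0 hl0Λ hlne, ?_⟩
        have := hadd l hlΛ l0 hl0Λ hlne
        rw [hsl, hsl0] at this
        intro hc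
        rw [hc] at this
        simp at this
      · intro m hm
        have hmΛ : m ∈ Λ := (Finset.mem_filter.mp hm).1
        have hsm : ¬(s m = 0) := (Finset.mem_filter.mp hm).2
        have hmne : m ≠ l0 := fun hc => hsm (hc ▸ hsl0)
        rw [Finset.mem_erase, hT0, Finset.mem_filter]
        refine ⟨?_, hgrp m hmΛ l0 hl0Λ hmne, ?_⟩
        · intro hc
          have : m = 0 := by linear_combination hc
          exact h0 (this ▸ hmΛ)
        · have := hadd m hmΛ l0 hl0Λ hmne
          rcases hval m hmΛ with hv | hv
          · exact absurd hv hsm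
          · rw [hv, hsl0] at this
            linear_combination this
      · intro l _
        linear_combination l0 * h2
      · intro m _
        linear_combination l0 * h2
    have hsplit : T0.card + T1.card = Λ.card := Finset.card_filter_add_card_filter_not _
    have herase : (T0.erase l0).card = T0.card - 1 := Finset.card_erase_of_mem hl0
    have hpos : 1 ≤ T0.card := Finset.card_pos.mpr ⟨l0, hl0⟩
    omega



/-- Mathon's theorem: a closed set of conics together with the nucleus forms a
maximal arc of degree `|Λ| + 1`. -/
theorem closed_arc {h : ℕ} (hcard : Fintype.card F = 2 ^ h) {Λ : Finset F} {a b : F → F}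
    (hcl : IsClosedConicSet F h Λ a b) :
    IsMaximalArc F (mathonSet F Λ a b) (Λ.card + 1) := by
  classical
  haveI := char2 hcard
  haveI : Finite (Pt F) := Quotient.finite _
  have h2 : (2 : F) = 0 := by exact_mod_cast CharP.cast_eq_zero F 2
  obtain ⟨h0, htr, hclo⟩ := hcl
  have hne0 : ∀ l ∈ Λ, l ≠ 0 := fun l hl hc => h0 (hc ▸ hl)
  have hmul : ∀ l ∈ Λ, ∀ m ∈ Λ, l ≠ m → (l + m) ∈ Λ ∧
      (l + m) * a (l + m) = a l * l + a m * m ∧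
      (l + m) * b (l + m) = b l * l + b m * m := by
    intro l hl m hm hlm
    have hν : l + m ≠ 0 := by
      intro hc
      exact hlm (by linear_combination hc - m * h2)
    obtain ⟨hmem, ha, hb⟩ := hclo l hl m hm hlm
    refine ⟨hmem, ?_, ?_⟩
    · rw [ha]; field_simp
    · rw [hb]; field_simp
  have hdisj : ∀ l ∈ Λ, ∀ m ∈ Λ, l ≠ m →
      conicSet F (a l) (b l) l ∩ conicSet F (a m) (b m) m = ∅ := by
    intro l hl m hm hlm
    obtain ⟨hmem, ha, hb⟩ := hmul l hl m hm hlm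
    exact conics_disjoint hcard hlm (hne0 l hl) ha hb (htr l hl) (htr m hm) (htr _ hmem)
  refine ⟨⟨pt001 F, Or.inl rfl⟩, ?_, ?_⟩
  · -- proper subset
    have hv10 : (![0, 1, 0] : Fin 3 → F) ≠ 0 := by
      intro hc; simpa using congrFun hc 1
    intro huniv
    have hP : Projectivization.mk F ![0, 1, 0] hv10 ∈ mathonSet F Λ a b := by
      rw [huniv]; trivial
    rcases hP with hP | hP
    · rw [Set.mem_singleton_iff, pt001, Projectivization.mk_eq_mk_iff'] at hP
      obtain ⟨c, hc⟩ := hP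
      simpa using congrFun hc 1
    · obtain ⟨l, hl, hPl⟩ := Set.mem_iUnion₂.mp hP
      rw [mem_conic_iff] at hPl
      simp only [Matrix.cons_val_zero, Matrix.cons_val_one, Matrix.head_cons,
        Matrix.cons_val_two, Matrix.tail_cons] at hPl
      have hbl : b l = 0 := by linear_combination hPl
      have := htr l hl
      rw [hbl, mul_zero, tr_zero] at this
      exact one_ne_zero this.symm
  · -- every line meets in 0 or Λ.card + 1 points
    rintro L ⟨u, v, w, hne, rfl⟩
    by_cases hw : w = 0
    · -- line through the nucleus
      subst hw
      right
      have huv : ¬(u = 0 ∧ v = 0) := fun ⟨e1, e2⟩ => hne ⟨e1, e2, rfl⟩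
      set L0 : Set (Pt F) :=
        {P : Pt F | u * P.rep 0 + v * P.rep 1 + 0 * P.rep 2 = 0} with hL0
      have hmem001 : pt001 F ∈ L0 := pt001_mem_lineSet_iff.mpr rfl
      have hsplit : mathonSet F Λ a b ∩ L0 =
          {pt001 F} ∪ ⋃ l ∈ Λ, (conicSet F (a l) (b l) l ∩ L0) := by
        rw [mathonSet, Set.union_inter_distrib_right, Set.iUnion₂_inter]
        congr 1
        exact Set.inter_eq_left.mpr (Set.singleton_subset_iff.mpr hmem001)
      have hdisjU : ∀ i ∈ Λ, ∀ j ∈ Λ, i ≠ j →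
          (conicSet F (a i) (b i) i ∩ L0) ∩ (conicSet F (a j) (b j) j ∩ L0) = ∅ := by
        intro i hi j hj hij
        rw [Set.eq_empty_iff_forall_notMem]
        rintro x ⟨⟨hx1, -⟩, hx2, -⟩
        have := hdisj i hi j hj hij
        exact (this ▸ (⟨hx1, hx2⟩ : x ∈ conicSet F (a i) (b i) i ∩ conicSet F (a j) (b j) j) :
          x ∈ (∅ : Set (Pt F)))
      have hnotin : pt001 F ∉ ⋃ l ∈ Λ, (conicSet F (a l) (b l) l ∩ L0) := by
        intro hc
        obtain ⟨l, hl, hPl, -⟩ := Set.mem_iUnion₂.mp hc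
        exact hne0 l hl (pt001_mem_conic_iff.mp hPl)
      rw [hsplit, Set.ncard_union_eq (Set.disjoint_left.mpr
        (fun x hx => by rw [Set.mem_singleton_iff] at hx; rw [hx]; exact hnotin))
        (Set.toFinite _) (Set.toFinite _), Set.ncard_singleton,
        ncard_biUnion Λ _ hdisjU]
      have hones : ∀ l ∈ Λ, (conicSet F (a l) (b l) l ∩ L0).ncard = 1 := by
        intro l hl
        obtain ⟨P₀, hP₀⟩ := conic_n0line_single hcard (hne0 l hl) huv
          (a := a l) (b := b l)
        rw [hL0, hP₀, Set.ncard_singleton]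
      rw [Finset.sum_congr rfl hones, Finset.sum_const, smul_eq_mul, mul_one]
      omega
    · -- line missing the nucleus
      have hLeq : {P : Pt F | u * P.rep 0 + v * P.rep 1 + w * P.rep 2 = 0}
          = {P : Pt F | (u / w) * P.rep 0 + (v / w) * P.rep 1 + P.rep 2 = 0} := by
        ext P
        simp only [Set.mem_setOf_eq]
        constructor
        · intro hP
          have e : (u / w) * P.rep 0 + (v / w) * P.rep 1 + P.rep 2
              = (u * P.rep 0 + v * P.rep 1 + w * P.rep 2) / w := by
            field_simp
          rw [e, hP, zero_div]
        · intro hP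
          have e : u * P.rep 0 + v * P.rep 1 + w * P.rep 2
              = w * ((u / w) * P.rep 0 + (v / w) * P.rep 1 + P.rep 2) := by
            field_simp
          rw [e, hP, mul_zero]
      rw [hLeq]
      set u' := u / w with hu'
      set v' := v / w with hv'
      set L1 : Set (Pt F) :=
        {P : Pt F | u' * P.rep 0 + v' * P.rep 1 + P.rep 2 = 0} with hL1
      have h001 : pt001 F ∉ L1 := by
        rw [hL1, pt001]
        intro hc
        rw [Set.mem_setOf_eq] at hc
        have := (mem_nlineSet_iff _ _).mp hc
        simp at this
      have hsplit : mathonSet F Λ a b ∩ L1 =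
          ⋃ l ∈ Λ, (conicSet F (a l) (b l) l ∩ L1) := by
        rw [mathonSet, Set.union_inter_distrib_right, Set.iUnion₂_inter,
          Set.singleton_inter_eq_empty.mpr h001, Set.empty_union]
      have hdisjU : ∀ i ∈ Λ, ∀ j ∈ Λ, i ≠ j →
          (conicSet F (a i) (b i) i ∩ L1) ∩ (conicSet F (a j) (b j) j ∩ L1) = ∅ := by
        intro i hi j hj hij
        rw [Set.eq_empty_iff_forall_notMem]
        rintro x ⟨⟨hx1, -⟩, hx2, -⟩
        have := hdisj i hi j hj hij
        exact (this ▸ (⟨hx1, hx2⟩ : x ∈ conicSet F (a i) (b i) i ∩ conicSet F (a j) (b j) j) :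
          x ∈ (∅ : Set (Pt F)))
      have hcases : ∀ l ∈ Λ, (conicSet F (a l) (b l) l ∩ L1).ncard =
          if tr F h ((a l + l * u' ^ 2) * (b l + l * v' ^ 2)) = 0 then 2 else 0 := by
        intro l hl
        rcases tr_val hcard ((a l + l * u' ^ 2) * (b l + l * v' ^ 2)) with ht | ht
        · rw [if_pos ht]
          obtain ⟨P₁, P₂, hP12, hset⟩ := conic_nline_pair hcard ht
          rw [hL1, hset, Set.ncard_pair hP12]
        · rw [if_neg (by rw [ht]; exact one_ne_zero)]
          rw [hL1, conic_nline_empty hcard ht, Set.ncard_empty]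
      rw [hsplit, ncard_biUnion Λ _ hdisjU, Finset.sum_congr rfl hcases]
      have hsum : ∑ l ∈ Λ, (if tr F h ((a l + l * u' ^ 2) * (b l + l * v' ^ 2)) = 0
          then 2 else 0) =
          2 * (Λ.filter fun l => tr F h ((a l + l * u' ^ 2) * (b l + l * v' ^ 2)) = 0).card := by
        rw [Finset.sum_ite, Finset.sum_const, Finset.sum_const_zero, add_zero,
          smul_eq_mul, mul_comm]
      rw [hsum]
      have hhalf := half_count h0
        (fun l hl m hm hlm => (hmul l hl m hm hlm).1)
        (fun l => tr F h ((a l + l * u' ^ 2) * (b l + l * v' ^ 2)))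
        (fun l hl => tr_val hcard _)
        (fun l hl m hm hlm => by
          obtain ⟨hmem, ha, hb⟩ := hmul l hl m hm hlm
          exact s_sum hcard ha hb (htr l hl) (htr m hm) (htr _ hmem))
      rcases hhalf with hzero | hhalf
      · left; rw [hzero]
      · right; rw [hhalf]


end S6


/-- extending a closed set of conics by a disjoint conic `F_{α_d,β_d,λ_d}`
(satisfying the trace conditions) yields a closed set on the index set
`Λ ∪ {λ_d} ∪ (Λ + λ_d)`, and hence a maximal arc of degree `2(|Λ|+1)`. -/
theorem statement6 {F : Type} [Field F] [Fintype F] (h : ℕ)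
    (hcard : Fintype.card F = 2 ^ h)
    (Λ : Finset F) (a b : F → F) (hclosed : MaxArc.IsClosedConicSet F h Λ a b)
    (αd βd lamd : F) (htrd : MaxArc.tr F h (αd * βd) = 1)
    (hlamd : lamd ∉ Λ) (hlamd0 : lamd ≠ 0)
    (hdisj : ∀ l ∈ Λ, MaxArc.tr F h
      (((a l * l + αd * lamd) / (l + lamd)) * ((b l * l + βd * lamd) / (l + lamd))) = 1) :
    MaxArc.IsClosedConicSet F h (Λ ∪ {lamd} ∪ Λ.image (fun l => l + lamd))
      (fun μ => if μ ∈ Λ then a μ else if μ = lamd then αd else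
        (a (μ - lamd) * (μ - lamd) + αd * lamd) / μ)
      (fun μ => if μ ∈ Λ then b μ else if μ = lamd then βd else
        (b (μ - lamd) * (μ - lamd) + βd * lamd) / μ) ∧
    MaxArc.IsMaximalArc F
      (MaxArc.mathonSet F (Λ ∪ {lamd} ∪ Λ.image (fun l => l + lamd))
        (fun μ => if μ ∈ Λ then a μ else if μ = lamd then αd else
          (a (μ - lamd) * (μ - lamd) + αd * lamd) / μ)
        (fun μ => if μ ∈ Λ then b μ else if μ = lamd then βd else
          (b (μ - lamd) * (μ - lamd) + βd * lamd) / μ))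
      (2 * (Λ.card + 1)) := by
  classical
  haveI := S6.char2 hcard
  have h2 : (2 : F) = 0 := by exact_mod_cast CharP.cast_eq_zero F 2
  obtain ⟨h0, htr, hclo⟩ := hclosed
  set a' : F → F := fun μ => if μ ∈ Λ then a μ else if μ = lamd then αd else
    (a (μ - lamd) * (μ - lamd) + αd * lamd) / μ with ha'
  set b' : F → F := fun μ => if μ ∈ Λ then b μ else if μ = lamd then βd else
    (b (μ - lamd) * (μ - lamd) + βd * lamd) / μ with hb'
  set Λ' : Finset F := Λ ∪ {lamd} ∪ Λ.image (fun l => l + lamd) with hΛ'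
  -- basic facts about the shifted indices
  have hmulΛ : ∀ l ∈ Λ, ∀ m ∈ Λ, l ≠ m → (l + m) ∈ Λ ∧
      (l + m) * a (l + m) = a l * l + a m * m ∧
      (l + m) * b (l + m) = b l * l + b m * m := by
    intro l hl m hm hlm
    have hν : l + m ≠ 0 := by
      intro hc
      exact hlm (by linear_combination hc - m * h2)
    obtain ⟨hmem, hae, hbe⟩ := hclo l hl m hm hlm
    refine ⟨hmem, ?_, ?_⟩
    · rw [hae]; field_simp
    · rw [hbe]; field_simp
  have hsh_notin : ∀ l ∈ Λ, l + lamd ∉ Λ := by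
    intro l hl hc
    by_cases hll : l + lamd = l
    · exact hlamd0 (by linear_combination hll)
    · have := (hmulΛ (l + lamd) hc l hl hll).1
      have he : (l + lamd) + l = lamd := by linear_combination l * h2
      rw [he] at this
      exact hlamd this
  have hsh_ne_lamd : ∀ l ∈ Λ, l + lamd ≠ lamd := by
    intro l hl hc
    have : l = 0 := by linear_combination hc
    exact h0 (this ▸ hl)
  have hsh_ne0 : ∀ l ∈ Λ, l + lamd ≠ 0 := by
    intro l hl hc
    have : lamd = l := by linear_combination hc - l * h2
    exact hlamd (this ▸ hl)
  have hlamd_ne0' : ∀ l ∈ Λ, l ≠ 0 := fun l hl hc => h0 (hc ▸ hl)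
  -- membership in Λ'
  have hmemΛ' : ∀ μ : F, μ ∈ Λ' ↔ (μ ∈ Λ ∨ μ = lamd ∨ ∃ l ∈ Λ, l + lamd = μ) := by
    intro μ
    rw [hΛ', Finset.mem_union, Finset.mem_union, Finset.mem_singleton, or_assoc]
    simp only [Finset.mem_image]
  -- evaluation of the extended functions
  have ha'Λ : ∀ l ∈ Λ, a' l = a l := by
    intro l hl; rw [ha']; simp [hl]
  have hb'Λ : ∀ l ∈ Λ, b' l = b l := by
    intro l hl; rw [hb']; simp [hl]
  have ha'd : a' lamd = αd := by
    rw [ha']; simp [hlamd]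
  have hb'd : b' lamd = βd := by
    rw [hb']; simp [hlamd]
  have ha'S : ∀ l ∈ Λ, a' (l + lamd) = (a l * l + αd * lamd) / (l + lamd) := by
    intro l hl
    rw [ha']
    simp only [hsh_notin l hl, if_false, hsh_ne_lamd l hl, if_false, add_sub_cancel_right]
  have hb'S : ∀ l ∈ Λ, b' (l + lamd) = (b l * l + βd * lamd) / (l + lamd) := by
    intro l hl
    rw [hb']
    simp only [hsh_notin l hl, if_false, hsh_ne_lamd l hl, if_false, add_sub_cancel_right]
  have hmulSa : ∀ l ∈ Λ, (l + lamd) * a' (l + lamd) = a l * l + αd * lamd := by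
    intro l hl
    rw [ha'S l hl]
    field_simp [hsh_ne0 l hl]
  have hmulSb : ∀ l ∈ Λ, (l + lamd) * b' (l + lamd) = b l * l + βd * lamd := by
    intro l hl
    rw [hb'S l hl]
    field_simp [hsh_ne0 l hl]
  -- 0 ∉ Λ'
  have h0' : (0 : F) ∉ Λ' := by
    rw [hmemΛ']
    push_neg
    refine ⟨h0, fun hc => hlamd0 hc.symm, ?_⟩
    intro l hl hc
    exact hsh_ne0 l hl hc
  -- trace condition on Λ'
  have htr' : ∀ μ ∈ Λ', MaxArc.tr F h (a' μ * b' μ) = 1 := by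
    intro μ hμ
    rcases (hmemΛ' μ).mp hμ with hμ | hμ | ⟨l, hl, rfl⟩
    · rw [ha'Λ μ hμ, hb'Λ μ hμ]; exact htr μ hμ
    · rw [hμ, ha'd, hb'd]; exact htrd
    · rw [ha'S l hl, hb'S l hl]; exact hdisj l hl
  -- additivity
  have key : ∀ μ ∈ Λ', ∀ μ' ∈ Λ', μ ≠ μ' → (μ + μ') ∈ Λ' ∧
      ((μ + μ') * a' (μ + μ') = a' μ * μ + a' μ' * μ') ∧
      ((μ + μ') * b' (μ + μ') = b' μ * μ + b' μ' * μ') := by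
    intro μ hμ μ' hμ' hne
    rcases (hmemΛ' μ).mp hμ with hμ1 | hμ1 | ⟨l, hl, rfl⟩
    · rcases (hmemΛ' μ').mp hμ' with hμ'1 | hμ'1 | ⟨l', hl', rfl⟩
      · -- both in Λ
        obtain ⟨hmem, hae, hbe⟩ := hmulΛ μ hμ1 μ' hμ'1 hne
        refine ⟨(hmemΛ' _).mpr (Or.inl hmem), ?_, ?_⟩
        · rw [ha'Λ _ hmem, ha'Λ _ hμ1, ha'Λ _ hμ'1]
          linear_combination hae
        · rw [hb'Λ _ hmem, hb'Λ _ hμ1, hb'Λ _ hμ'1]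
          linear_combination hbe
      · -- Λ and lamd
        rw [hμ'1]
        refine ⟨(hmemΛ' _).mpr (Or.inr (Or.inr ⟨μ, hμ1, rfl⟩)), ?_, ?_⟩
        · rw [hmulSa μ hμ1, ha'Λ _ hμ1, ha'd]
        · rw [hmulSb μ hμ1, hb'Λ _ hμ1, hb'd]
      · -- Λ and shift
        by_cases hll : μ = l'
        · subst hll
          have he : μ + (μ + lamd) = lamd := by linear_combination μ * h2
          rw [he]
          refine ⟨(hmemΛ' _).mpr (Or.inr (Or.inl rfl)), ?_, ?_⟩
          · rw [ha'd, ha'Λ _ hμ1]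
            linear_combination -hmulSa μ hμ1 - (a μ * μ) * h2
          · rw [hb'd, hb'Λ _ hμ1]
            linear_combination -hmulSb μ hμ1 - (b μ * μ) * h2
        · obtain ⟨hmem, hae, hbe⟩ := hmulΛ μ hμ1 l' hl' hll
          have he : μ + (l' + lamd) = (μ + l') + lamd := by ring
          rw [he]
          refine ⟨(hmemΛ' _).mpr (Or.inr (Or.inr ⟨μ + l', hmem, rfl⟩)), ?_, ?_⟩
          · rw [hmulSa _ hmem, ha'Λ _ hμ1]
            linear_combination hae - hmulSa l' hl'
          · rw [hmulSb _ hmem, hb'Λ _ hμ1]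
            linear_combination hbe - hmulSb l' hl'
    · rw [hμ1]
      rcases (hmemΛ' μ').mp hμ' with hμ'1 | hμ'1 | ⟨l', hl', rfl⟩
      · -- lamd and Λ
        refine ⟨(hmemΛ' _).mpr (Or.inr (Or.inr ⟨μ', hμ'1, by ring⟩)), ?_, ?_⟩
        · rw [add_comm lamd μ', hmulSa μ' hμ'1, ha'Λ _ hμ'1, ha'd]
          ring
        · rw [add_comm lamd μ', hmulSb μ' hμ'1, hb'Λ _ hμ'1, hb'd]
          ring
      · -- lamd and lamd: impossible
        exact absurd (hμ1.trans hμ'1.symm) hne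
      · -- lamd and shift
        have he : lamd + (l' + lamd) = l' := by linear_combination lamd * h2
        rw [he]
        refine ⟨(hmemΛ' _).mpr (Or.inl hl'), ?_, ?_⟩
        · rw [ha'Λ _ hl', ha'd]
          linear_combination -hmulSa l' hl' - (αd * lamd) * h2
        · rw [hb'Λ _ hl', hb'd]
          linear_combination -hmulSb l' hl' - (βd * lamd) * h2
    · rcases (hmemΛ' μ').mp hμ' with hμ'1 | hμ'1 | ⟨l', hl', rfl⟩
      · -- shift and Λ
        by_cases hll : l = μ'
        · subst hll
          have he : (l + lamd) + l = lamd := by linear_combination l * h2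
          rw [he]
          refine ⟨(hmemΛ' _).mpr (Or.inr (Or.inl rfl)), ?_, ?_⟩
          · rw [ha'd, ha'Λ _ hμ'1]
            linear_combination -hmulSa l hμ'1 - (a l * l) * h2
          · rw [hb'd, hb'Λ _ hμ'1]
            linear_combination -hmulSb l hμ'1 - (b l * l) * h2
        · obtain ⟨hmem, hae, hbe⟩ := hmulΛ l hl μ' hμ'1 hll
          have he : (l + lamd) + μ' = (l + μ') + lamd := by ring
          rw [he]
          refine ⟨(hmemΛ' _).mpr (Or.inr (Or.inr ⟨l + μ', hmem, rfl⟩)), ?_, ?_⟩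
          · rw [hmulSa _ hmem, ha'Λ _ hμ'1]
            linear_combination hae - hmulSa l hl
          · rw [hmulSb _ hmem, hb'Λ _ hμ'1]
            linear_combination hbe - hmulSb l hl
      · -- shift and lamd
        rw [hμ'1]
        have he : (l + lamd) + lamd = l := by linear_combination lamd * h2
        rw [he]
        refine ⟨(hmemΛ' _).mpr (Or.inl hl), ?_, ?_⟩
        · rw [ha'Λ _ hl, ha'd]
          linear_combination -hmulSa l hl - (αd * lamd) * h2
        · rw [hb'Λ _ hl, hb'd]
          linear_combination -hmulSb l hl - (βd * lamd) * h2
      · -- shift and shift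
        have hll : l ≠ l' := by
          intro hc
          exact hne (by rw [hc])
        obtain ⟨hmem, hae, hbe⟩ := hmulΛ l hl l' hl' hll
        have he : (l + lamd) + (l' + lamd) = l + l' := by linear_combination lamd * h2
        rw [he]
        refine ⟨(hmemΛ' _).mpr (Or.inl hmem), ?_, ?_⟩
        · rw [ha'Λ _ hmem]
          linear_combination hae - hmulSa l hl - hmulSa l' hl' - (αd * lamd) * h2
        · rw [hb'Λ _ hmem]
          linear_combination hbe - hmulSb l hl - hmulSb l' hl' - (βd * lamd) * h2
  have hclosed' : MaxArc.IsClosedConicSet F h Λ' a' b' := by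
    refine ⟨h0', htr', ?_⟩
    intro μ hμ μ' hμ' hne
    obtain ⟨hmem, hae, hbe⟩ := key μ hμ μ' hμ' hne
    have hν : μ + μ' ≠ 0 := fun hc => h0' (hc ▸ hmem)
    refine ⟨hmem, ?_, ?_⟩
    · rw [eq_div_iff hν]
      linear_combination hae
    · rw [eq_div_iff hν]
      linear_combination hbe
  refine ⟨hclosed', ?_⟩
  -- cardinality of Λ'
  have hcard1 : Λ'.card = 2 * Λ.card + 1 := by
    rw [hΛ']
    rw [Finset.card_union_of_disjoint, Finset.card_union_of_disjoint,
      Finset.card_singleton, Finset.card_image_of_injective _ (add_left_injective lamd)]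
    · omega
    · exact Finset.disjoint_singleton_right.mpr hlamd
    · rw [Finset.disjoint_right]
      intro x hx
      obtain ⟨l, hl, rfl⟩ := Finset.mem_image.mp hx
      rw [Finset.mem_union, Finset.mem_singleton]
      rintro (hc | hc)
      · exact hsh_notin l hl hc
      · exact hsh_ne_lamd l hl hc
  have harc := S6.closed_arc hcard hclosed'
  rw [hcard1] at harc
  have : 2 * Λ.card + 1 + 1 = 2 * (Λ.card + 1) := by omega
  rw [this] at harc
  exact harc
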